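/- Let K : ℝ → ℝ be continuous with -c² ≤ K(t) ≤ 0 for all t, for some constant c > 0. Then for every w ∈ ℝ there exists a unique Jacobi solution j : ℝ → ℝ (j'' = -K·j) with j(0) = w such that t ↦ |j(t)| is nonincreasing on ℝ. That is, there is a unique stable Jacobi field with any prescribed initial value. -/

import Mathlib

open Set Filter

namespace StableJacobiAux

/-- the first-order system for the Jacobi equation -/
def vf (K : ℝ → ℝ) : ℝ → ℝ × ℝ → ℝ × ℝ := fun t p => (p.2, -K t * p.1)

lemma vf_lip {K : ℝ → ℝ} {L : NNReal} (hL : ∀ t, |K t| ≤ (L : ℝ)) (hL1 : 1 ≤ (L : ℝ)) (t : ℝ) :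
    LipschitzWith L (vf K t) := by
  apply LipschitzWith.of_dist_le_mul
  intro p q
  rw [Prod.dist_eq]
  rw [Prod.dist_eq]
  simp only [vf, Real.dist_eq]
  apply max_le
  · calc |p.2 - q.2| ≤ max |p.1 - q.1| |p.2 - q.2| := le_max_right _ _
    _ ≤ L * max |p.1 - q.1| |p.2 - q.2| := le_mul_of_one_le_left (le_max_iff.2 (Or.inl (abs_nonneg _))) hL1
  · have : -K t * p.1 - -K t * q.1 = -K t * (p.1 - q.1) := by ring
    rw [this, abs_mul, abs_neg]
    calc |K t| * |p.1 - q.1| ≤ L * |p.1 - q.1| := by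
          apply mul_le_mul_of_nonneg_right (hL t) (abs_nonneg _)
    _ ≤ L * max |p.1 - q.1| |p.2 - q.2| := by
          apply mul_le_mul_of_nonneg_left (le_max_left _ _) (by positivity)

lemma vf_norm {K : ℝ → ℝ} {L : NNReal} (hL : ∀ t, |K t| ≤ (L : ℝ)) (hL1 : 1 ≤ (L : ℝ))
    (t : ℝ) (p : ℝ × ℝ) : ‖vf K t p‖ ≤ L * ‖p‖ := by
  rw [Prod.norm_def, Prod.norm_def]
  simp only [vf, Real.norm_eq_abs]
  apply max_le
  · calc |p.2| ≤ max |p.1| |p.2| := le_max_right _ _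
    _ ≤ L * max |p.1| |p.2| := le_mul_of_one_le_left (le_max_iff.2 (Or.inl (abs_nonneg _))) hL1
  · rw [abs_mul, abs_neg]
    calc |K t| * |p.1| ≤ L * |p.1| := mul_le_mul_of_nonneg_right (hL t) (abs_nonneg _)
    _ ≤ L * max |p.1| |p.2| := mul_le_mul_of_nonneg_left (le_max_left _ _) (by positivity)

/-- Local existence for the system, on an interval of fixed half-length `1/(2L)`. -/
lemma local_ex {K : ℝ → ℝ} {L : NNReal} (hK : Continuous K)
    (hL : ∀ t, |K t| ≤ (L : ℝ)) (hL1 : 1 ≤ (L : ℝ)) (t₁ : ℝ) (p₁ : ℝ × ℝ) :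
    ∃ f : ℝ → ℝ × ℝ, f t₁ = p₁ ∧ ∀ t ∈ Icc (t₁ - 1/(2*L)) (t₁ + 1/(2*L)),
      HasDerivWithinAt f (vf K t (f t)) (Icc (t₁ - 1/(2*L)) (t₁ + 1/(2*L))) t := by
  have hL0 : (0:ℝ) < L := lt_of_lt_of_le one_pos hL1
  have hmem : t₁ ∈ Icc (t₁ - 1/(2*(L:ℝ))) (t₁ + 1/(2*(L:ℝ))) :=
    ⟨by linarith [le_of_lt (by positivity : (0:ℝ) < 1/(2*L))],
      by linarith [le_of_lt (by positivity : (0:ℝ) < 1/(2*L))]⟩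
  have hpl : IsPicardLindelof (vf K) (⟨t₁, hmem⟩ : Icc (t₁ - 1/(2*(L:ℝ))) (t₁ + 1/(2*(L:ℝ)))) p₁
      (‖p₁‖₊ + 1) 0 (L * (2 * ‖p₁‖₊ + 1)) L := by
    constructor
    · intro t _
      exact (vf_lip hL hL1 t).lipschitzOnWith
    · intro x _
      simp only [vf]
      exact (continuous_const.prodMk ((hK.neg.mul continuous_const))).continuousOn
    · intro t _ x hx
      simp only [NNReal.coe_mul, NNReal.coe_add, NNReal.coe_ofNat, NNReal.coe_one, coe_nnnorm]
        at hx ⊢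
      have h1 : ‖x‖ ≤ 2 * ‖p₁‖ + 1 := by
        have := mem_closedBall_iff_norm.1 hx
        calc ‖x‖ = ‖x - p₁ + p₁‖ := by ring_nf
        _ ≤ ‖x - p₁‖ + ‖p₁‖ := norm_add_le _ _
        _ ≤ 2 * ‖p₁‖ + 1 := by linarith [norm_nonneg p₁]
      calc ‖vf K t x‖ ≤ L * ‖x‖ := vf_norm hL hL1 t x
      _ ≤ L * (2 * ‖p₁‖ + 1) := mul_le_mul_of_nonneg_left h1 (by positivity)
    · dsimp only
      simp only [NNReal.coe_mul, NNReal.coe_add, NNReal.coe_ofNat, NNReal.coe_one, coe_nnnorm,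
        NNReal.coe_zero, sub_zero]
      have h2 : t₁ + 1/(2*(L:ℝ)) - t₁ = 1/(2*L) := by ring
      have h3 : t₁ - (t₁ - 1/(2*(L:ℝ))) = 1/(2*L) := by ring
      rw [h2, h3, max_self]
      have hLne : (L:ℝ) ≠ 0 := ne_of_gt hL0
      have : (L:ℝ) * (2 * ‖p₁‖ + 1) * (1 / (2 * (L:ℝ))) = ‖p₁‖ + 1/2 := by
        field_simp
      rw [this]
      linarith
  obtain ⟨f, hf0, hf⟩ := hpl.exists_eq_forall_mem_Icc_hasDerivWithinAt₀
  exact ⟨f, hf0, hf⟩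


lemma hdw_singleton (f : ℝ → ℝ × ℝ) (f' : ℝ × ℝ) (x : ℝ) :
    HasDerivWithinAt f f' {x} x :=
  hasDerivWithinAt_iff_hasFDerivWithinAt.2
    HasFDerivWithinAt.singleton

lemma hdw_nmem {f : ℝ → ℝ × ℝ} {f' : ℝ × ℝ} {s : Set ℝ} {x : ℝ} (h : x ∉ closure s) :
    HasDerivWithinAt f f' s x :=
  hasDerivWithinAt_iff_hasFDerivWithinAt.2 (HasFDerivWithinAt.of_notMem_closure h)

/-- Glue two solutions on adjacent closed intervals. -/
lemma glue {v : ℝ → ℝ × ℝ → ℝ × ℝ} {f g : ℝ → ℝ × ℝ} {a b d : ℝ} (hab : a ≤ b) (hbd : b ≤ d)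
    (hf : ∀ t ∈ Icc a b, HasDerivWithinAt f (v t (f t)) (Icc a b) t)
    (hg : ∀ t ∈ Icc b d, HasDerivWithinAt g (v t (g t)) (Icc b d) t)
    (hfg : f b = g b) :
    ∃ F : ℝ → ℝ × ℝ, (∀ t ∈ Icc a b, F t = f t) ∧ (∀ t ∈ Icc b d, F t = g t) ∧
      ∀ t ∈ Icc a d, HasDerivWithinAt F (v t (F t)) (Icc a d) t := by
  classical
  set F : ℝ → ℝ × ℝ := fun t => if t ≤ b then f t else g t with hF
  have hFf : ∀ t ∈ Icc a b, F t = f t := fun t ht => if_pos ht.2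
  have hFg : ∀ t ∈ Icc b d, F t = g t := by
    intro t ht
    by_cases hle : t ≤ b
    · have : t = b := le_antisymm hle ht.1
      simp [hF, this, hfg]
    · exact if_neg hle
  refine ⟨F, hFf, hFg, ?_⟩
  intro t ht
  have hunion : Icc a b ∪ Icc b d = Icc a d := Icc_union_Icc_eq_Icc hab hbd
  have h1 : HasDerivWithinAt F (v t (F t)) (Icc a b) t := by
    by_cases hle : t ≤ b
    · have htm : t ∈ Icc a b := ⟨ht.1, hle⟩
      have := (hf t htm).congr (fun s hs => hFf s hs) (hFf t htm)
      rwa [hFf t htm]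
    · apply hdw_nmem
      rw [IsClosed.closure_eq isClosed_Icc]
      exact fun hmem => hle hmem.2
  have h2 : HasDerivWithinAt F (v t (F t)) (Icc b d) t := by
    by_cases hge : b ≤ t
    · have htm : t ∈ Icc b d := ⟨hge, ht.2⟩
      have := (hg t htm).congr (fun s hs => hFg s hs) (hFg t htm)
      rwa [hFg t htm]
    · apply hdw_nmem
      rw [IsClosed.closure_eq isClosed_Icc]
      exact fun hmem => hge hmem.1
  have := h1.union h2
  rwa [hunion] at this

/-- Forward chain: solution on `Icc t₀ (t₀ + n/(2L))`. -/
lemma chainF {K : ℝ → ℝ} {L : NNReal} (hK : Continuous K)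
    (hL : ∀ t, |K t| ≤ (L : ℝ)) (hL1 : 1 ≤ (L : ℝ)) (t₀ : ℝ) (p₀ : ℝ × ℝ) (n : ℕ) :
    ∃ f : ℝ → ℝ × ℝ, f t₀ = p₀ ∧ ∀ t ∈ Icc t₀ (t₀ + n * (1/(2*L))),
      HasDerivWithinAt f (vf K t (f t)) (Icc t₀ (t₀ + n * (1/(2*L)))) t := by
  have hL0 : (0:ℝ) < L := lt_of_lt_of_le one_pos hL1
  have hh : (0:ℝ) < 1/(2*L) := by positivity
  induction n with
  | zero =>
    refine ⟨fun _ => p₀, rfl, ?_⟩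
    intro t ht
    simp only [Nat.cast_zero, zero_mul, add_zero] at ht ⊢
    rw [Icc_self] at ht ⊢
    rw [mem_singleton_iff] at ht
    subst ht
    exact hdw_singleton _ _ _
  | succ n ih =>
    obtain ⟨f, hf0, hf⟩ := ih
    set b : ℝ := t₀ + n * (1/(2*L)) with hb
    obtain ⟨g, hg0, hg⟩ := local_ex hK hL hL1 b (f b)
    have hab : t₀ ≤ b := by
      rw [hb]; nlinarith [Nat.cast_nonneg (α := ℝ) n]
    have hg' : ∀ t ∈ Icc b (b + 1/(2*L)), HasDerivWithinAt g (vf K t (g t))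
        (Icc b (b + 1/(2*L))) t := by
      intro t ht
      have hsub : Icc b (b + 1/(2*(L:ℝ))) ⊆ Icc (b - 1/(2*L)) (b + 1/(2*L)) :=
        Icc_subset_Icc (by linarith) le_rfl
      exact (hg t (hsub ht)).mono hsub
    obtain ⟨F, hF1, hF2, hF⟩ := glue hab (by linarith) hf hg' hg0.symm
    have hend : b + 1/(2*(L:ℝ)) = t₀ + (n+1 : ℕ) * (1/(2*L)) := by
      rw [hb]; push_cast; ring
    refine ⟨F, ?_, ?_⟩
    · rw [hF1 t₀ ⟨le_rfl, hab⟩, hf0]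
    · rw [← hend]
      exact hF

/-- Backward chain via time reversal. -/
lemma chainB {K : ℝ → ℝ} {L : NNReal} (hK : Continuous K)
    (hL : ∀ t, |K t| ≤ (L : ℝ)) (hL1 : 1 ≤ (L : ℝ)) (t₀ : ℝ) (p₀ : ℝ × ℝ) (n : ℕ) :
    ∃ f : ℝ → ℝ × ℝ, f t₀ = p₀ ∧ ∀ t ∈ Icc (t₀ - n * (1/(2*L))) t₀,
      HasDerivWithinAt f (vf K t (f t)) (Icc (t₀ - n * (1/(2*L))) t₀) t := by
  set K' : ℝ → ℝ := fun u => K (-u) with hK'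
  have hK'c : Continuous K' := hK.comp continuous_neg
  have hL' : ∀ u, |K' u| ≤ (L : ℝ) := fun u => hL (-u)
  obtain ⟨G, hG0, hG⟩ := chainF hK'c hL' hL1 (-t₀) (p₀.1, -p₀.2) n
  set h : ℝ := 1/(2*(L:ℝ)) with hh
  set N : ℝ × ℝ →L[ℝ] ℝ × ℝ :=
    (ContinuousLinearMap.fst ℝ ℝ ℝ).prod (-(ContinuousLinearMap.snd ℝ ℝ ℝ)) with hN
  have hNap : ∀ p : ℝ × ℝ, N p = (p.1, -p.2) := by
    intro p
    simp [hN, ContinuousLinearMap.prod_apply]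
  set F : ℝ → ℝ × ℝ := fun s => ((G (-s)).1, -(G (-s)).2) with hF
  have hF0 : F t₀ = p₀ := by
    rw [hF]
    simp only [hG0]
    simp
  refine ⟨F, hF0, ?_⟩
  intro t ht
  have hmt : -t ∈ Icc (-t₀) (-t₀ + n * h) := ⟨by linarith [ht.2], by linarith [ht.1]⟩
  have maps : MapsTo (fun s : ℝ => -s) (Icc (t₀ - n * h) t₀) (Icc (-t₀) (-t₀ + n * h)) := by
    intro s hs
    show -s ∈ Icc (-t₀) (-t₀ + n * h)
    exact ⟨by linarith [hs.2], by linarith [hs.1]⟩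
  have step1 : HasDerivWithinAt (G ∘ fun s : ℝ => -s)
      ((-1 : ℝ) • vf K' (-t) (G (-t))) (Icc (t₀ - n * h) t₀) t :=
    HasDerivWithinAt.scomp t (hG (-t) hmt) (hasDerivAt_neg t).hasDerivWithinAt maps
  have step2 := N.hasFDerivAt.comp_hasDerivWithinAt t step1
  have heqfun : (⇑N ∘ (G ∘ fun s : ℝ => -s)) = F := by
    funext s
    simp [Function.comp, hNap, hF]
  have heqval : N ((-1 : ℝ) • vf K' (-t) (G (-t))) = vf K t (F t) := by
    rw [hNap]
    show _ = ((F t).2, -K t * (F t).1)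
    rw [Prod.ext_iff]
    constructor
    · show (((-1 : ℝ) • vf K' (-t) (G (-t))).1) = (F t).2
      simp [vf, hF]
    · show (-((-1 : ℝ) • vf K' (-t) (G (-t))).2) = -K t * (F t).1
      simp [vf, hF, hK', neg_neg]
  rw [heqfun, heqval] at step2
  exact step2

/-- Two-sided chain. -/
lemma chain2 {K : ℝ → ℝ} {L : NNReal} (hK : Continuous K)
    (hL : ∀ t, |K t| ≤ (L : ℝ)) (hL1 : 1 ≤ (L : ℝ)) (t₀ : ℝ) (p₀ : ℝ × ℝ) (n : ℕ) :
    ∃ f : ℝ → ℝ × ℝ, f t₀ = p₀ ∧ ∀ t ∈ Icc (t₀ - n * (1/(2*L))) (t₀ + n * (1/(2*L))),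
      HasDerivWithinAt f (vf K t (f t)) (Icc (t₀ - n * (1/(2*L))) (t₀ + n * (1/(2*L)))) t := by
  have hL0 : (0:ℝ) < L := lt_of_lt_of_le one_pos hL1
  have hnh : (0:ℝ) ≤ n * (1/(2*L)) := by positivity
  obtain ⟨fB, hB0, hB⟩ := chainB hK hL hL1 t₀ p₀ n
  obtain ⟨fF, hF0, hFd⟩ := chainF hK hL hL1 t₀ p₀ n
  obtain ⟨F, hF1, hF2, hFF⟩ := glue (by linarith : t₀ - n * (1/(2*(L:ℝ))) ≤ t₀)
    (by linarith : t₀ ≤ t₀ + n * (1/(2*(L:ℝ)))) hB hFd (by rw [hB0, hF0])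
  exact ⟨F, by rw [hF1 t₀ ⟨by linarith, le_rfl⟩, hB0], hFF⟩

/-- Global existence for the system. -/
lemma global_ex {K : ℝ → ℝ} {L : NNReal} (hK : Continuous K)
    (hL : ∀ t, |K t| ≤ (L : ℝ)) (hL1 : 1 ≤ (L : ℝ)) (t₀ : ℝ) (p₀ : ℝ × ℝ) :
    ∃ F : ℝ → ℝ × ℝ, F t₀ = p₀ ∧ ∀ t, HasDerivAt F (vf K t (F t)) t := by
  have hL0 : (0:ℝ) < L := lt_of_lt_of_le one_pos hL1
  set h : ℝ := 1/(2*(L:ℝ)) with hh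
  have hhpos : 0 < h := by rw [hh]; positivity
  choose fs h0 hd using chain2 hK hL hL1 t₀ p₀
  have key : ∀ m n : ℕ, m ≤ n → EqOn (fs m) (fs n) (Icc (t₀ - m * h) (t₀ + m * h)) := by
    intro m n hmn
    rcases Nat.eq_zero_or_pos m with hm | hm
    · subst hm
      intro s hs
      simp only [Nat.cast_zero, zero_mul, sub_zero, add_zero, Icc_self, mem_singleton_iff] at hs
      rw [hs, h0, h0]
    · have h1m : (1:ℝ) ≤ m := by exact_mod_cast hm
      have hmpos : (0:ℝ) < m * h := by nlinarith
      have hmn' : (m:ℝ) ≤ n := by exact_mod_cast hmn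
      have hsub : Icc (t₀ - m * h) (t₀ + m * h) ⊆ Icc (t₀ - n * h) (t₀ + n * h) :=
        Icc_subset_Icc (by nlinarith) (by nlinarith)
      have hssub : ∀ s ∈ Ioo (t₀ - m * h) (t₀ + m * h), s ∈ Ioo (t₀ - n * h) (t₀ + n * h) := by
        intro s hs
        exact ⟨lt_of_le_of_lt (by nlinarith) hs.1, lt_of_lt_of_le hs.2 (by nlinarith)⟩
      apply ODE_solution_unique_of_mem_Icc
        (s := fun _ => (univ : Set (ℝ × ℝ)))
        (fun t _ => (vf_lip hL hL1 t).lipschitzOnWith)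
        (⟨by linarith, by linarith⟩ : t₀ ∈ Ioo (t₀ - m * h) (t₀ + m * h))
      · exact fun s hs => (hd m s hs).continuousWithinAt
      · intro s hs
        exact (hd m s (Ioo_subset_Icc_self hs)).hasDerivAt (Icc_mem_nhds hs.1 hs.2)
      · exact fun s _ => trivial
      · exact fun s hs => ((hd n s (hsub hs)).continuousWithinAt).mono hsub
      · intro s hs
        have hs' := hssub s hs
        exact (hd n s (Ioo_subset_Icc_self hs')).hasDerivAt (Icc_mem_nhds hs'.1 hs'.2)
      · exact fun s _ => trivial
      · rw [h0, h0]
  set N : ℝ → ℕ := fun t => ⌈|t - t₀| / h⌉₊ + 1 with hNdef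
  have hN : ∀ t, |t - t₀| < N t * h := by
    intro t
    have h1 : |t - t₀| / h ≤ ⌈|t - t₀| / h⌉₊ := Nat.le_ceil _
    have h2 : (⌈|t - t₀| / h⌉₊ : ℝ) < N t := by
      rw [hNdef]; push_cast; linarith
    calc |t - t₀| = (|t - t₀| / h) * h := by field_simp
    _ ≤ (⌈|t - t₀| / h⌉₊ : ℝ) * h := by nlinarith
    _ < N t * h := by nlinarith
  have hmem : ∀ t, t ∈ Icc (t₀ - N t * h) (t₀ + N t * h) := by
    intro t
    have := abs_lt.1 (hN t)
    exact ⟨by linarith [this.1], by linarith [this.2]⟩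
  set F : ℝ → ℝ × ℝ := fun t => fs (N t) t with hFdef
  have hagree : ∀ (n : ℕ) (s : ℝ), s ∈ Icc (t₀ - n * h) (t₀ + n * h) → F s = fs n s := by
    intro n s hs
    rcases le_total (N s) n with hle | hle
    · exact key (N s) n hle (hmem s)
    · exact (key n (N s) hle hs).symm
  refine ⟨F, ?_, ?_⟩
  · rw [hagree 0 t₀ (by simp), h0]
  · intro t
    set n : ℕ := N t with hn
    have hoo : t ∈ Ioo (t₀ - n * h) (t₀ + n * h) := by
      have := abs_lt.1 (hN t)
      exact ⟨by linarith [this.1], by linarith [this.2]⟩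
    have base : HasDerivAt (fs n) (vf K t (fs n t)) t :=
      (hd n t (Ioo_subset_Icc_self hoo)).hasDerivAt (Icc_mem_nhds hoo.1 hoo.2)
    have hev : F =ᶠ[nhds t] fs n := by
      have hopen : Ioo (t₀ - n * h) (t₀ + n * h) ∈ nhds t := Ioo_mem_nhds hoo.1 hoo.2
      filter_upwards [hopen] with s hs
      exact hagree n s (Ioo_subset_Icc_self hs)
    have hFt : F t = fs n t := hagree n t (Ioo_subset_Icc_self hoo)
    have := base.congr_of_eventuallyEq hev
    rwa [← hFt] at this

/-- Global uniqueness for the system. -/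
lemma global_uniq {K : ℝ → ℝ} {L : NNReal}
    (hL : ∀ t, |K t| ≤ (L : ℝ)) (hL1 : 1 ≤ (L : ℝ)) {F G : ℝ → ℝ × ℝ} {t₁ : ℝ}
    (hF : ∀ t, HasDerivAt F (vf K t (F t)) t) (hG : ∀ t, HasDerivAt G (vf K t (G t)) t)
    (heq : F t₁ = G t₁) : ∀ t, F t = G t := by
  intro t
  have h1 : t ∈ Icc (min t t₁ - 1) (max t t₁ + 1) :=
    ⟨by linarith [min_le_left t t₁], by linarith [le_max_left t t₁]⟩
  have h2 : t₁ ∈ Ioo (min t t₁ - 1) (max t t₁ + 1) :=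
    ⟨by linarith [min_le_right t t₁], by linarith [le_max_right t t₁]⟩
  refine ODE_solution_unique_of_mem_Icc (s := fun _ => (univ : Set (ℝ × ℝ)))
    (fun t _ => (vf_lip hL hL1 t).lipschitzOnWith) h2
    (fun s _ => (hF s).continuousAt.continuousWithinAt)
    (fun s _ => hF s) (fun s _ => trivial)
    (fun s _ => (hG s).continuousAt.continuousWithinAt)
    (fun s _ => hG s) (fun s _ => trivial) heq h1

/-- Jacobi solution predicate with explicit derivative companion. -/
def IsJac (K : ℝ → ℝ) (j j' : ℝ → ℝ) : Prop :=
  (∀ t, HasDerivAt j (j' t) t) ∧ (∀ t, HasDerivAt j' (-K t * j t) t)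

lemma IsJac.system {K : ℝ → ℝ} {j j' : ℝ → ℝ} (h : IsJac K j j') :
    ∀ t, HasDerivAt (fun t => (j t, j' t)) (vf K t (j t, j' t)) t := fun t =>
  (h.1 t).prodMk (h.2 t)

lemma jac_exists {K : ℝ → ℝ} {L : NNReal} (hK : Continuous K)
    (hL : ∀ t, |K t| ≤ (L : ℝ)) (hL1 : 1 ≤ (L : ℝ)) (a b : ℝ) :
    ∃ j j' : ℝ → ℝ, IsJac K j j' ∧ j 0 = a ∧ j' 0 = b := by
  obtain ⟨F, hF0, hF⟩ := global_ex hK hL hL1 0 (a, b)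
  refine ⟨fun t => (F t).1, fun t => (F t).2, ⟨?_, ?_⟩, by show (F 0).1 = a; rw [hF0], by show (F 0).2 = b; rw [hF0]⟩
  · intro t
    have := (ContinuousLinearMap.fst ℝ ℝ ℝ).hasFDerivAt.comp_hasDerivAt t (hF t)
    exact this
  · intro t
    have := (ContinuousLinearMap.snd ℝ ℝ ℝ).hasFDerivAt.comp_hasDerivAt t (hF t)
    exact this

lemma jac_unique {K : ℝ → ℝ} {L : NNReal}
    (hL : ∀ t, |K t| ≤ (L : ℝ)) (hL1 : 1 ≤ (L : ℝ)) {j j' g g' : ℝ → ℝ} {t₁ : ℝ}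
    (hj : IsJac K j j') (hg : IsJac K g g') (h1 : j t₁ = g t₁) (h2 : j' t₁ = g' t₁) :
    ∀ t, j t = g t := by
  have := global_uniq hL hL1 hj.system hg.system (t₁ := t₁) (by rw [h1, h2])
  intro t
  have ht := this t
  exact congrArg Prod.fst ht

lemma IsJac.sub {K : ℝ → ℝ} {j j' g g' : ℝ → ℝ} (hj : IsJac K j j') (hg : IsJac K g g') :
    IsJac K (fun t => j t - g t) (fun t => j' t - g' t) :=
  ⟨fun t => (hj.1 t).sub (hg.1 t), fun t => by
    have := (hj.2 t).sub (hg.2 t)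
    have heq : -K t * j t - -K t * g t = -K t * (j t - g t) := by ring
    rwa [heq] at this⟩

lemma IsJac.comb {K : ℝ → ℝ} {j j' g g' : ℝ → ℝ} (hj : IsJac K j j') (hg : IsJac K g g')
    (a b : ℝ) :
    IsJac K (fun t => a * j t + b * g t) (fun t => a * j' t + b * g' t) :=
  ⟨fun t => ((hj.1 t).const_mul a).add ((hg.1 t).const_mul b), fun t => by
    have := ((hj.2 t).const_mul a).add ((hg.2 t).const_mul b)
    have heq : a * (-K t * j t) + b * (-K t * g t) = -K t * (a * j t + b * g t) := by ring
    rwa [heq] at this⟩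

lemma IsJac.zero (K : ℝ → ℝ) : IsJac K (fun _ => 0) (fun _ => 0) :=
  ⟨fun t => hasDerivAt_const t 0, fun t => by
    have h0 := hasDerivAt_const t (0:ℝ)
    have heq : -K t * (0:ℝ) = 0 := by ring
    rw [show -K t * (fun _ : ℝ => (0:ℝ)) t = (0:ℝ) by simp]
    exact h0⟩

lemma IsJac.deriv_eq {K : ℝ → ℝ} {j j' : ℝ → ℝ} (h : IsJac K j j') : deriv j = j' :=
  funext fun t => (h.1 t).deriv

lemma IsJac.cont {K : ℝ → ℝ} {j j' : ℝ → ℝ} (h : IsJac K j j') : Continuous j := by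
  have : Differentiable ℝ j := fun t => (h.1 t).differentiableAt
  exact this.continuous

/-- A Jacobi solution (for `K ≤ 0`) is convex on any interval where it is nonnegative. -/
lemma IsJac.convexOn {K : ℝ → ℝ} {j j' : ℝ → ℝ} (h : IsJac K j j') (hKle : ∀ t, K t ≤ 0)
    {D : Set ℝ} (hD : Convex ℝ D) (hj : ∀ t ∈ D, 0 ≤ j t) : ConvexOn ℝ D j := by
  apply convexOn_of_deriv2_nonneg hD (h.cont.continuousOn)
  · exact fun t _ => ((h.1 t).differentiableAt).differentiableWithinAt
  · rw [h.deriv_eq]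
    exact fun t _ => ((h.2 t).differentiableAt).differentiableWithinAt
  · intro t ht
    have ht' : t ∈ D := interior_subset ht
    have : deriv^[2] j t = deriv (deriv j) t := by
      simp [Function.iterate_succ, Function.iterate_one]
    rw [this, h.deriv_eq, (h.2 t).deriv]
    have := hKle t
    have := hj t ht'
    nlinarith

/-- A Jacobi solution (for `K ≤ 0`) is concave on any interval where it is nonpositive. -/
lemma IsJac.concaveOn {K : ℝ → ℝ} {j j' : ℝ → ℝ} (h : IsJac K j j') (hKle : ∀ t, K t ≤ 0)
    {D : Set ℝ} (hD : Convex ℝ D) (hj : ∀ t ∈ D, j t ≤ 0) : ConcaveOn ℝ D j := by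
  apply concaveOn_of_deriv2_nonpos hD (h.cont.continuousOn)
  · exact fun t _ => ((h.1 t).differentiableAt).differentiableWithinAt
  · rw [h.deriv_eq]
    exact fun t _ => ((h.2 t).differentiableAt).differentiableWithinAt
  · intro t ht
    have ht' : t ∈ D := interior_subset ht
    have : deriv^[2] j t = deriv (deriv j) t := by
      simp [Function.iterate_succ, Function.iterate_one]
    rw [this, h.deriv_eq, (h.2 t).deriv]
    have := hKle t
    have := hj t ht'
    nlinarith

/-- slope sign: derivative nonneg if function is ≥ its value just to the right -/
lemma deriv_nonneg_of_right {f : ℝ → ℝ} {d x e : ℝ} (hx : HasDerivAt f d x) (hxe : x < e)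
    (hge : ∀ s, x < s → s ≤ e → f x ≤ f s) : 0 ≤ d := by
  have hs := hasDerivAt_iff_tendsto_slope.1 hx
  have hs' : Tendsto (slope f x) (nhdsWithin x (Ioi x)) (nhds d) :=
    hs.mono_left (nhdsWithin_mono _ (fun s hs => ne_of_gt hs))
  apply ge_of_tendsto hs'
  filter_upwards [mem_of_superset (Ioo_mem_nhdsGT hxe) Ioo_subset_Ioc_self] with s hs2
  rw [slope_def_field]
  have := hge s hs2.1 hs2.2
  apply div_nonneg (by linarith) (by linarith [hs2.1])

lemma deriv_nonpos_of_right {f : ℝ → ℝ} {d x e : ℝ} (hx : HasDerivAt f d x) (hxe : x < e)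
    (hle : ∀ s, x < s → s ≤ e → f s ≤ f x) : d ≤ 0 := by
  have hs := hasDerivAt_iff_tendsto_slope.1 hx
  have hs' : Tendsto (slope f x) (nhdsWithin x (Ioi x)) (nhds d) :=
    hs.mono_left (nhdsWithin_mono _ (fun s hs => ne_of_gt hs))
  apply le_of_tendsto hs'
  filter_upwards [mem_of_superset (Ioo_mem_nhdsGT hxe) Ioo_subset_Ioc_self] with s hs2
  rw [slope_def_field]
  have := hle s hs2.1 hs2.2
  apply div_nonpos_of_nonpos_of_nonneg (by linarith) (by linarith [hs2.1])

/-- Sign propagation: a Jacobi solution nonnegative at both endpoints is nonnegative between. -/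
lemma IsJac.nonneg_on {K j j' : ℝ → ℝ} (h : IsJac K j j') (hKle : ∀ t, K t ≤ 0)
    {a b : ℝ} (ha : 0 ≤ j a) (hb : 0 ≤ j b) :
    ∀ t ∈ Icc a b, 0 ≤ j t := by
  intro t ht
  by_contra hneg
  push_neg at hneg
  set Sa : Set ℝ := Icc a t ∩ j ⁻¹' (Ici 0) with hSa
  have hSac : IsClosed Sa := isClosed_Icc.inter (isClosed_Ici.preimage h.cont)
  have hSane : Sa.Nonempty := ⟨a, ⟨le_rfl, ht.1⟩, ha⟩
  have hSabdd : BddAbove Sa := bddAbove_Icc.mono inter_subset_left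
  set α := sSup Sa with hα
  have hαmem : α ∈ Sa := hSac.csSup_mem hSane hSabdd
  have hαt : α < t := lt_of_le_of_ne hαmem.1.2 (fun he => by
    have : (0:ℝ) ≤ j t := he ▸ hαmem.2
    linarith)
  have hneg1 : ∀ s, α < s → s ≤ t → j s < 0 := by
    intro s h1 h2
    by_contra hc
    push_neg at hc
    have : s ∈ Sa := ⟨⟨le_trans hαmem.1.1 (le_of_lt h1), h2⟩, hc⟩
    exact absurd (le_csSup hSabdd this) (not_le.2 h1)
  set Sb : Set ℝ := Icc t b ∩ j ⁻¹' (Ici 0) with hSb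
  have hSbc : IsClosed Sb := isClosed_Icc.inter (isClosed_Ici.preimage h.cont)
  have hSbne : Sb.Nonempty := ⟨b, ⟨ht.2, le_rfl⟩, hb⟩
  have hSbbdd : BddBelow Sb := bddBelow_Icc.mono inter_subset_left
  set β := sInf Sb with hβ
  have hβmem : β ∈ Sb := hSbc.csInf_mem hSbne hSbbdd
  have htβ : t < β := lt_of_le_of_ne hβmem.1.1 (fun he => by
    have : (0:ℝ) ≤ j t := he ▸ hβmem.2
    linarith)
  have hneg2 : ∀ s, t ≤ s → s < β → j s < 0 := by
    intro s h1 h2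
    by_contra hc
    push_neg at hc
    have : s ∈ Sb := ⟨⟨h1, le_trans (le_of_lt h2) hβmem.1.2⟩, hc⟩
    exact absurd (csInf_le hSbbdd this) (not_le.2 h2)
  have hjα : j α = 0 := by
    refine le_antisymm ?_ hαmem.2
    have hten : Tendsto j (nhdsWithin α (Ioi α)) (nhds (j α)) :=
      (h.cont.continuousAt).continuousWithinAt
    apply le_of_tendsto hten
    filter_upwards [mem_of_superset (Ioo_mem_nhdsGT hαt) Ioo_subset_Ioc_self] with s hs
    exact le_of_lt (hneg1 s hs.1 hs.2)
  have hjβ : j β = 0 := by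
    refine le_antisymm ?_ hβmem.2
    have hten : Tendsto j (nhdsWithin β (Iio β)) (nhds (j β)) :=
      (h.cont.continuousAt).continuousWithinAt
    apply le_of_tendsto hten
    filter_upwards [Ico_mem_nhdsLT htβ] with s hs
    exact le_of_lt (hneg2 s hs.1 hs.2)
  have hαβ : α < β := lt_trans hαt htβ
  have hnonpos : ∀ s ∈ Icc α β, j s ≤ 0 := by
    intro s hs
    rcases eq_or_lt_of_le hs.1 with he | hlt
    · rw [← he, hjα]
    · rcases le_or_gt s t with hle | hgt
      · exact le_of_lt (hneg1 s hlt hle)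
      · rcases eq_or_lt_of_le hs.2 with he2 | hlt2
        · rw [he2, hjβ]
        · exact le_of_lt (hneg2 s (le_of_lt hgt) hlt2)
  have hconc := h.concaveOn hKle (convex_Icc α β) hnonpos
  have hd : (0:ℝ) < β - α := by linarith
  set lam := (β - t) / (β - α) with hlam
  set mu := (t - α) / (β - α) with hmu
  have hlam0 : 0 ≤ lam := div_nonneg (by linarith) (by linarith)
  have hmu0 : 0 ≤ mu := div_nonneg (by linarith) (by linarith)
  have hsum : lam + mu = 1 := by rw [hlam, hmu, ← add_div, div_eq_one_iff_eq hd.ne']; ring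
  have hcombo : lam • α + mu • β = t := by
    rw [hlam, hmu, smul_eq_mul, smul_eq_mul, div_mul_eq_mul_div, div_mul_eq_mul_div, ← add_div,
      div_eq_iff hd.ne']; ring
  have := hconc.2 (left_mem_Icc.2 hαβ.le) (right_mem_Icc.2 hαβ.le) hlam0 hmu0 hsum
  rw [hcombo, hjα, hjβ] at this
  simp only [smul_eq_mul, mul_zero, add_zero] at this
  linarith

/-- A nonnegative convex function vanishing at the right endpoint is nonincreasing. -/
lemma conv_anti {f : ℝ → ℝ} {p q : ℝ} (hconv : ConvexOn ℝ (Icc p q) f) (hq : f q = 0)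
    (hpos : ∀ t ∈ Icc p q, 0 ≤ f t) {t₁ t₂ : ℝ} (h1 : t₁ ∈ Icc p q) (h2 : t₂ ∈ Icc p q)
    (h12 : t₁ ≤ t₂) : f t₂ ≤ f t₁ := by
  rcases eq_or_lt_of_le h12 with he | hlt
  · rw [he]
  · rcases eq_or_lt_of_le h2.2 with he2 | hlt2
    · rw [he2, hq]; exact hpos t₁ h1
    · have hd : (0:ℝ) < q - t₁ := by linarith
      set lam := (q - t₂) / (q - t₁) with hlam
      set mu := (t₂ - t₁) / (q - t₁) with hmu
      have hlam0 : 0 ≤ lam := div_nonneg (by linarith) (by linarith)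
      have hmu0 : 0 ≤ mu := div_nonneg (by linarith) (by linarith)
      have hlam1 : lam ≤ 1 := by
        rw [hlam, div_le_one hd]; linarith
      have hsum : lam + mu = 1 := by rw [hlam, hmu, ← add_div, div_eq_one_iff_eq hd.ne']; ring
      have hcombo : lam • t₁ + mu • q = t₂ := by
        rw [hlam, hmu, smul_eq_mul, smul_eq_mul, div_mul_eq_mul_div, div_mul_eq_mul_div, ← add_div,
          div_eq_iff hd.ne']; ring
      have := hconv.2 h1 (right_mem_Icc.2 (by linarith [h1.1] : p ≤ q)) hlam0 hmu0 hsum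
      rw [hcombo, hq] at this
      simp only [smul_eq_mul, mul_zero, add_zero] at this
      have hft1 : 0 ≤ f t₁ := hpos t₁ h1
      calc f t₂ ≤ lam * f t₁ := this
      _ ≤ 1 * f t₁ := mul_le_mul_of_nonneg_right hlam1 hft1
      _ = f t₁ := one_mul _

/-- Existence of a positive, nonincreasing Jacobi solution with value 1 at 0. -/
lemma stable_exists {K : ℝ → ℝ} {L : NNReal} (hK : Continuous K) (hKle : ∀ t, K t ≤ 0)
    (hL : ∀ t, |K t| ≤ (L : ℝ)) (hL1 : 1 ≤ (L : ℝ)) :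
    ∃ j j' : ℝ → ℝ, IsJac K j j' ∧ j 0 = 1 ∧ (∀ t, 0 < j t) ∧ (∀ t, j' t ≤ 0) := by
  obtain ⟨A, A', hA, hA0, hA'0⟩ := jac_exists hK hL hL1 1 0
  obtain ⟨B, B', hB, hB0, hB'0⟩ := jac_exists hK hL hL1 0 1
  -- B is positive on the positive axis
  have hBpos : ∀ s, 0 < s → 0 < B s := by
    intro s hs
    by_contra hc
    push_neg at hc
    have hslope := hasDerivAt_iff_tendsto_slope.1 (hB.1 0)
    rw [hB'0] at hslope
    have h1 : Tendsto (slope B 0) (nhdsWithin 0 (Ioi 0)) (nhds 1) :=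
      hslope.mono_left (nhdsWithin_mono _ (fun v hv => ne_of_gt hv))
    have h2 : ∀ᶠ v in nhdsWithin 0 (Ioi 0), 0 < slope B 0 v :=
      h1.eventually (eventually_gt_nhds one_pos)
    have h3 : Ioo 0 s ∈ nhdsWithin 0 (Ioi 0) := Ioo_mem_nhdsGT hs
    obtain ⟨e, heslope, hemem⟩ := (h2.and (eventually_of_mem h3 (fun v hv => hv))).exists
    have heB : 0 < B e := by
      rw [slope_def_field, hB0] at heslope
      have he0 : 0 < e := hemem.1
      rcases div_pos_iff.1 heslope with ⟨hnum, _⟩ | ⟨_, hden⟩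
      · linarith
      · linarith
    set Z : Set ℝ := Icc e s ∩ B ⁻¹' (Iic 0) with hZ
    have hZc : IsClosed Z := isClosed_Icc.inter (isClosed_Iic.preimage hB.cont)
    have hZne : Z.Nonempty := ⟨s, ⟨hemem.2.le, le_rfl⟩, hc⟩
    have hZbdd : BddBelow Z := bddBelow_Icc.mono inter_subset_left
    set z := sInf Z with hz
    have hzmem : z ∈ Z := hZc.csInf_mem hZne hZbdd
    have hez : e < z := lt_of_le_of_ne hzmem.1.1 (fun he => by
      have : B z ≤ 0 := hzmem.2
      rw [← he] at this
      linarith)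
    have hpos' : ∀ v, e ≤ v → v < z → 0 < B v := by
      intro v h1 h2
      by_contra hcv
      push_neg at hcv
      have : v ∈ Z := ⟨⟨h1, le_trans h2.le hzmem.1.2⟩, hcv⟩
      exact absurd (csInf_le hZbdd this) (not_le.2 h2)
    have hBz : B z = 0 := by
      refine le_antisymm hzmem.2 ?_
      have hten : Tendsto B (nhdsWithin z (Iio z)) (nhds (B z)) :=
        (hB.cont.continuousAt).continuousWithinAt
      apply ge_of_tendsto hten
      filter_upwards [Ico_mem_nhdsLT hez] with v hv
      exact (hpos' v hv.1 hv.2).le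
    have hz0 : 0 < z := lt_trans hemem.1 hez
    have hBnn : ∀ t ∈ Icc 0 z, 0 ≤ B t :=
      hB.nonneg_on hKle (le_of_eq hB0.symm) (le_of_eq hBz.symm)
    have hconv := hB.convexOn hKle (convex_Icc 0 z) hBnn
    set lam := (z - e) / z with hlam
    set mu := e / z with hmu
    have hlam0 : 0 ≤ lam := div_nonneg (by linarith) (by linarith)
    have hmu0 : 0 ≤ mu := div_nonneg (by linarith [hemem.1]) (by linarith)
    have hsum : lam + mu = 1 := by rw [hlam, hmu, ← add_div, div_eq_one_iff_eq hz0.ne']; ring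
    have hcombo : lam • (0:ℝ) + mu • z = e := by
      rw [hlam, hmu, smul_eq_mul, smul_eq_mul, mul_zero, zero_add, div_mul_cancel₀ _ hz0.ne']
    have := hconv.2 (left_mem_Icc.2 hz0.le) (right_mem_Icc.2 hz0.le) hlam0 hmu0 hsum
    rw [hcombo, hB0, hBz] at this
    simp only [smul_eq_mul, mul_zero, add_zero] at this
    linarith
  -- approximating sequence
  set s : ℕ → ℝ := fun n => (n : ℝ) + 1 with hsdef
  have hsn0 : ∀ n, 0 < s n := fun n => by positivity
  set q : ℕ → ℝ := fun n => A (s n) / B (s n) with hqdef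
  set jn : ℕ → ℝ → ℝ := fun n t => 1 * A t + -(q n) * B t with hjndef
  set jn' : ℕ → ℝ → ℝ := fun n t => 1 * A' t + -(q n) * B' t with hjn'def
  have hjn : ∀ n, IsJac K (jn n) (jn' n) := fun n => hA.comb hB 1 (-(q n))
  have hjn0 : ∀ n, jn n 0 = 1 := fun n => by
    simp only [hjndef, hA0, hB0]; ring
  have hjnsn : ∀ n, jn n (s n) = 0 := by
    intro n
    have hBn : B (s n) ≠ 0 := (hBpos _ (hsn0 n)).ne'
    simp only [hjndef, hqdef]
    rw [neg_mul, div_mul_cancel₀ _ hBn]; ring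
  have hjnn : ∀ n, ∀ t ∈ Icc 0 (s n), 0 ≤ jn n t := fun n =>
    (hjn n).nonneg_on hKle (by rw [hjn0]; norm_num) (le_of_eq (hjnsn n).symm)
  have hconvn : ∀ n, ConvexOn ℝ (Icc 0 (s n)) (jn n) := fun n =>
    (hjn n).convexOn hKle (convex_Icc _ _) (hjnn n)
  have hmono : ∀ n, ∀ t₁ ∈ Icc 0 (s n), ∀ t₂ ∈ Icc 0 (s n), t₁ ≤ t₂ → jn n t₂ ≤ jn n t₁ :=
    fun n t₁ h1 t₂ h2 h12 => conv_anti (hconvn n) (hjnsn n) (hjnn n) h1 h2 h12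
  set u : ℕ → ℝ := fun n => jn' n 0 with hudef
  have hule : ∀ n, u n ≤ 0 := by
    intro n
    apply deriv_nonpos_of_right ((hjn n).1 0) (hsn0 n)
    intro v h1 h2
    exact hmono n 0 ⟨le_rfl, (hsn0 n).le⟩ v ⟨h1.le, h2⟩ h1.le
  have humono : Monotone u := by
    apply monotone_nat_of_le_succ
    intro n
    have hd := (hjn (n+1)).sub (hjn n)
    have hd0 : jn (n+1) 0 - jn n 0 = 0 := by rw [hjn0, hjn0]; ring
    have hdsn : 0 ≤ jn (n+1) (s n) - jn n (s n) := by
      rw [hjnsn n, sub_zero]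
      apply hjnn (n+1) (s n)
      constructor
      · exact (hsn0 n).le
      · rw [hsdef]; push_cast; linarith
    have hnn := hd.nonneg_on hKle (a := 0) (b := s n) (le_of_eq hd0.symm) hdsn
    have := deriv_nonneg_of_right (hd.1 0) (hsn0 n) (fun v h1 h2 => by
      have := hnn v ⟨h1.le, h2⟩
      linarith [hd0])
    have h2 : 0 ≤ jn' (n+1) 0 - jn' n 0 := this
    show jn' n 0 ≤ jn' (n+1) 0
    linarith
  have hubdd : BddAbove (Set.range u) := ⟨0, by rintro x ⟨n, rfl⟩; exact hule n⟩
  set ustar := ⨆ n, u n with hustar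
  have hulim : Tendsto u atTop (nhds ustar) := tendsto_atTop_ciSup humono hubdd
  have hqu : ∀ n, -(q n) = u n := by
    intro n
    simp only [hudef, hjn'def, hA'0, hB'0]
    ring
  -- the limit solution
  set jst : ℝ → ℝ := fun t => 1 * A t + ustar * B t with hjstdef
  set jst' : ℝ → ℝ := fun t => 1 * A' t + ustar * B' t with hjst'def
  have hjst : IsJac K jst jst' := hA.comb hB 1 ustar
  have hjst0 : jst 0 = 1 := by simp only [hjstdef, hA0, hB0]; ring
  have hptwise : ∀ t, Tendsto (fun n => jn n t) atTop (nhds (jst t)) := by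
    intro t
    have : (fun n => jn n t) = fun n => 1 * A t + u n * B t := by
      funext n
      show 1 * A t + -q n * B t = 1 * A t + u n * B t
      rw [hqu n]
    rw [this, hjstdef]
    exact tendsto_const_nhds.add (hulim.mul_const (B t))
  have hjstnn : ∀ t, 0 ≤ t → 0 ≤ jst t := by
    intro t ht
    apply ge_of_tendsto (hptwise t)
    rw [eventually_atTop]
    refine ⟨⌈t⌉₊, fun n hn => ?_⟩
    apply hjnn n t
    refine ⟨ht, ?_⟩
    calc t ≤ (⌈t⌉₊ : ℝ) := Nat.le_ceil t
    _ ≤ (n : ℝ) := by exact_mod_cast hn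
    _ ≤ s n := by show (n:ℝ) ≤ (n:ℝ) + 1; linarith
  have hjstanti : ∀ t₁ t₂, 0 ≤ t₁ → t₁ ≤ t₂ → jst t₂ ≤ jst t₁ := by
    intro t₁ t₂ h0 h12
    apply le_of_tendsto_of_tendsto (hptwise t₂) (hptwise t₁)
    rw [EventuallyLE, eventually_atTop]
    refine ⟨⌈t₂⌉₊, fun n hn => ?_⟩
    have ht₂n : t₂ ≤ s n := by
      calc t₂ ≤ (⌈t₂⌉₊ : ℝ) := Nat.le_ceil t₂
      _ ≤ (n : ℝ) := by exact_mod_cast hn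
      _ ≤ s n := by show (n:ℝ) ≤ (n:ℝ) + 1; linarith
    exact hmono n t₁ ⟨h0, le_trans h12 ht₂n⟩ t₂ ⟨le_trans h0 h12, ht₂n⟩ h12
  -- positivity of jst on the nonnegative axis
  have hjstposnn : ∀ t, 0 ≤ t → 0 < jst t := by
    intro t ht
    rcases lt_or_ge 0 (jst t) with h | h
    · exact h
    have hjt : jst t = 0 := le_antisymm h (hjstnn t ht)
    have hzero : ∀ v, t ≤ v → jst v = 0 := by
      intro v hv
      refine le_antisymm ?_ (hjstnn v (le_trans ht hv))
      calc jst v ≤ jst t := hjstanti t v ht hv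
      _ = 0 := hjt
    have hev : jst =ᶠ[nhds (t+1)] (fun _ => (0:ℝ)) := by
      filter_upwards [Ioi_mem_nhds (by linarith : t < t + 1)] with v hv
      exact hzero v (le_of_lt hv)
    have hder0 : HasDerivAt jst 0 (t+1) :=
      (hasDerivAt_const (t+1) (0:ℝ)).congr_of_eventuallyEq hev
    have hd'val : jst' (t+1) = 0 := (hjst.1 (t+1)).unique hder0
    have hval : jst (t+1) = 0 := hzero (t+1) (by linarith)
    have := jac_unique hL hL1 hjst (IsJac.zero K) (t₁ := t+1) hval hd'val
    have h0' := this 0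
    rw [hjst0] at h0'
    norm_num at h0'
  -- positivity everywhere
  have hjstpos : ∀ t, 0 < jst t := by
    intro t
    rcases le_or_gt 0 t with h | h
    · exact hjstposnn t h
    by_contra hc
    push_neg at hc
    set Z : Set ℝ := Icc t 0 ∩ jst ⁻¹' (Iic 0) with hZ
    have hZc : IsClosed Z := isClosed_Icc.inter (isClosed_Iic.preimage hjst.cont)
    have hZne : Z.Nonempty := ⟨t, ⟨le_rfl, h.le⟩, hc⟩
    have hZbdd : BddAbove Z := bddAbove_Icc.mono inter_subset_left
    set z := sSup Z with hzdef
    have hzmem : z ∈ Z := hZc.csSup_mem hZne hZbdd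
    have hz0 : z < 0 := lt_of_le_of_ne hzmem.1.2 (fun he => by
      have : jst z ≤ 0 := hzmem.2
      rw [he, hjst0] at this
      linarith)
    have hpos' : ∀ v, z < v → v ≤ 0 → 0 < jst v := by
      intro v h1 h2
      by_contra hcv
      push_neg at hcv
      have : v ∈ Z := ⟨⟨le_trans hzmem.1.1 h1.le, h2⟩, hcv⟩
      exact absurd (le_csSup hZbdd this) (not_le.2 h1)
    have hjz : jst z = 0 := by
      refine le_antisymm hzmem.2 ?_
      have hten : Tendsto jst (nhdsWithin z (Ioi z)) (nhds (jst z)) :=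
        (hjst.cont.continuousAt).continuousWithinAt
      apply ge_of_tendsto hten
      filter_upwards [mem_of_superset (Ioo_mem_nhdsGT hz0) Ioo_subset_Ioc_self] with v hv
      exact (hpos' v hv.1 hv.2).le
    have hnn : ∀ v ∈ Icc z 1, 0 ≤ jst v := by
      intro v hv
      rcases le_or_gt v 0 with h1 | h1
      · rcases eq_or_lt_of_le hv.1 with he | hlt
        · rw [← he, hjz]
        · exact (hpos' v hlt h1).le
      · exact hjstnn v h1.le
    have hconv := hjst.convexOn hKle (convex_Icc z 1) hnn
    set lam := 1 / (1 - z) with hlam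
    set mu := -z / (1 - z) with hmu
    have h1z : (0:ℝ) < 1 - z := by linarith
    have hlam0 : 0 ≤ lam := by positivity
    have hmu0 : 0 ≤ mu := div_nonneg (by linarith) (by linarith)
    have hsum : lam + mu = 1 := by rw [hlam, hmu]; field_simp; ring
    have hcombo : lam • z + mu • (1:ℝ) = 0 := by
      rw [hlam, hmu, smul_eq_mul, smul_eq_mul]; ring
    have hineq := hconv.2 (left_mem_Icc.2 (by linarith)) (right_mem_Icc.2 (by linarith))
      hlam0 hmu0 hsum
    rw [hcombo, hjz, hjst0] at hineq
    simp only [smul_eq_mul, mul_zero, zero_add, mul_one] at hineq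
    have hjst1 : jst 1 ≤ 1 := by
      have := hjstanti 0 1 le_rfl zero_le_one
      rwa [hjst0] at this
    have hmu1 : mu < 1 := by
      rw [hmu, div_lt_one h1z]; linarith
    nlinarith [hjstnn 1 zero_le_one]
  -- nonpositivity of the derivative
  have hdiff' : Differentiable ℝ jst' := fun t => ((hjst.2 t).differentiableAt)
  have hmono' : Monotone jst' := by
    apply monotone_of_deriv_nonneg hdiff'
    intro x
    rw [(hjst.2 x).deriv]
    have h1 := hKle x
    have h2 := hjstpos x
    nlinarith
  have hjst'le : ∀ t, jst' t ≤ 0 := by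
    have hnonneg : ∀ t, 0 ≤ t → jst' t ≤ 0 := by
      intro t ht
      apply deriv_nonpos_of_right (hjst.1 t) (by linarith : t < t + 1)
      intro v h1 h2
      exact hjstanti t v ht h1.le
    intro t
    rcases le_or_gt 0 t with h | h
    · exact hnonneg t h
    · exact le_trans (hmono' h.le) (hnonneg 0 le_rfl)
  exact ⟨jst, jst', hjst, hjst0, hjstpos, hjst'le⟩

/-- Uniqueness of stable Jacobi fields with a given initial value. -/
lemma spec_unique {K : ℝ → ℝ} {L : NNReal} (hKle : ∀ t, K t ≤ 0)
    (hL : ∀ t, |K t| ≤ (L : ℝ)) (hL1 : 1 ≤ (L : ℝ)) {j g : ℝ → ℝ}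
    (hjd : Differentiable ℝ j) (hjd2 : Differentiable ℝ (deriv j))
    (hj2 : ∀ t, deriv (deriv j) t = -K t * j t) (hjanti : Antitone (fun t => |j t|))
    (hgd : Differentiable ℝ g) (hgd2 : Differentiable ℝ (deriv g))
    (hg2 : ∀ t, deriv (deriv g) t = -K t * g t) (hganti : Antitone (fun t => |g t|))
    (h0 : j 0 = g 0) : j = g := by
  have hjJ : IsJac K j (deriv j) := ⟨fun t => (hjd t).hasDerivAt, fun t => by
    have := (hjd2 t).hasDerivAt
    rwa [hj2 t] at this⟩
  have hgJ : IsJac K g (deriv g) := ⟨fun t => (hgd t).hasDerivAt, fun t => by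
    have := (hgd2 t).hasDerivAt
    rwa [hg2 t] at this⟩
  set d : ℝ → ℝ := fun t => j t - g t with hddef
  set d' : ℝ → ℝ := fun t => deriv j t - deriv g t with hd'def
  have hd : IsJac K d d' := hjJ.sub hgJ
  have hd0 : d 0 = 0 := by rw [hddef]; simp [h0]
  set Mb : ℝ := |j 0| + |g 0| with hMb
  have hbound : ∀ t, 0 ≤ t → |d t| ≤ Mb := by
    intro t ht
    have h1 : |j t| ≤ |j 0| := hjanti ht
    have h2 : |g t| ≤ |g 0| := hganti ht
    calc |d t| = |j t - g t| := rfl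
    _ ≤ |j t| + |g t| := by
        rw [sub_eq_add_neg]
        exact (abs_add_le _ _).trans (by rw [abs_neg])
    _ ≤ Mb := by rw [hMb]; linarith
  set g2 : ℝ → ℝ := fun t => d t * d t with hg2def
  have hg2deriv : deriv g2 = fun t => d' t * d t + d t * d' t :=
    funext fun t => ((hd.1 t).mul (hd.1 t)).deriv
  have hg2conv : ConvexOn ℝ univ g2 := by
    apply convexOn_of_deriv2_nonneg convex_univ
    · exact (hd.cont.mul hd.cont).continuousOn
    · exact fun t _ =>
        (((hd.1 t).mul (hd.1 t)).differentiableAt).differentiableWithinAt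
    · rw [hg2deriv]
      intro t _
      exact ((((hd.2 t).mul (hd.1 t)).add ((hd.1 t).mul (hd.2 t))).differentiableAt).differentiableWithinAt
    · intro t _
      have hit : deriv^[2] g2 t = deriv (deriv g2) t := by
        simp [Function.iterate_succ, Function.iterate_one]
      rw [hit, hg2deriv, (show HasDerivAt (fun t => d' t * d t + d t * d' t) _ t from
        (((hd.2 t).mul (hd.1 t)).add ((hd.1 t).mul (hd.2 t)))).deriv]
      have h1 := hKle t
      nlinarith [sq_nonneg (d' t), sq_nonneg (d t)]
  have hzero : ∀ t, 0 < t → d t = 0 := by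
    intro t ht
    by_contra hne
    have hpos : 0 < g2 t := mul_self_pos.2 hne
    set T : ℝ := max t (t * Mb^2 / g2 t + 1) with hT
    have hT1 : t ≤ T := le_max_left _ _
    have hT2 : t * Mb^2 / g2 t < T := lt_of_lt_of_le (lt_add_one _) (le_max_right _ _)
    have hT0 : 0 < T := lt_of_lt_of_le ht hT1
    set mu := t / T with hmu
    set lam := 1 - t / T with hlam
    have hmu0 : 0 ≤ mu := div_nonneg ht.le hT0.le
    have hmu1 : mu ≤ 1 := by rw [hmu, div_le_one hT0]; exact hT1
    have hlam0 : 0 ≤ lam := by rw [hlam]; linarith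
    have hsum : lam + mu = 1 := by rw [hlam, hmu]; ring
    have hcombo : lam • (0:ℝ) + mu • T = t := by
      rw [hlam, hmu, smul_eq_mul, smul_eq_mul, mul_zero, zero_add, div_mul_cancel₀ _ hT0.ne']
    have hineq := hg2conv.2 (mem_univ (0:ℝ)) (mem_univ T) hlam0 hmu0 hsum
    rw [hcombo] at hineq
    have hg20 : g2 0 = 0 := by rw [hg2def]; simp [hd0]
    rw [hg20] at hineq
    simp only [smul_eq_mul, mul_zero, zero_add] at hineq
    have hg2T : g2 T ≤ Mb^2 := by
      have hb := hbound T hT0.le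
      have h1 : d T ≤ |d T| := le_abs_self _
      have h2 : -|d T| ≤ d T := neg_abs_le _
      have h3 : 0 ≤ |d T| := abs_nonneg _
      show d T * d T ≤ Mb ^ 2
      nlinarith
    have hMb0 : 0 ≤ Mb := by rw [hMb]; positivity
    have hfinal : mu * g2 T < g2 t := by
      have hlt : t * Mb^2 < T * g2 t := by
        rw [div_lt_iff₀ hpos] at hT2
        linarith
      calc mu * g2 T ≤ mu * Mb^2 := mul_le_mul_of_nonneg_left hg2T hmu0
      _ = t * Mb^2 / T := by rw [hmu]; ring
      _ < g2 t := by rw [div_lt_iff₀ hT0]; linarith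
    linarith
  have hd1 : d 1 = 0 := hzero 1 one_pos
  have hdev : d =ᶠ[nhds 1] (fun _ => (0:ℝ)) := by
    filter_upwards [Ioi_mem_nhds (by norm_num : (0:ℝ) < 1)] with v hv
    exact hzero v hv
  have hder0 : HasDerivAt d 0 1 := (hasDerivAt_const 1 (0:ℝ)).congr_of_eventuallyEq hdev
  have hd'1 : d' 1 = 0 := (hd.1 1).unique hder0
  have hall := jac_unique hL hL1 hd (IsJac.zero K) (t₁ := 1) hd1 hd'1
  funext t
  have := hall t
  simp only [hddef] at this
  linarith

end StableJacobiAux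

open StableJacobiAux in
/-- Let `K : ℝ → ℝ` be continuous with `-c² ≤ K t ≤ 0` for all `t`, for some
constant `c > 0`. Then for every `w ∈ ℝ` there is a unique Jacobi solution
(`j'' = -K · j`) with `j 0 = w` such that `t ↦ |j t|` is nonincreasing on `ℝ`:
a unique stable Jacobi field with prescribed initial value. -/
theorem exists_unique_stable_jacobi (K : ℝ → ℝ) (c : ℝ) (hc : 0 < c)
    (hK : Continuous K) (hKle : ∀ t, K t ≤ 0) (hKge : ∀ t, -c ^ 2 ≤ K t)
    (w : ℝ) :
    ∃! j : ℝ → ℝ,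
      Differentiable ℝ j ∧ Differentiable ℝ (deriv j) ∧
      (∀ t, deriv (deriv j) t = -K t * j t) ∧
      j 0 = w ∧ Antitone (fun t => |j t|) := by
  have hLr0 : (0:ℝ) ≤ max 1 (c^2) := le_trans zero_le_one (le_max_left _ _)
  set L : NNReal := ⟨max 1 (c^2), hLr0⟩ with hLdef
  have hL1 : 1 ≤ (L : ℝ) := le_max_left _ _
  have hL : ∀ t, |K t| ≤ (L : ℝ) := by
    intro t
    rw [abs_le]
    constructor
    · calc -(L : ℝ) ≤ -(c^2) := neg_le_neg (le_max_right _ _)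
      _ ≤ K t := hKge t
    · calc K t ≤ 0 := hKle t
      _ ≤ (L : ℝ) := hLr0
  obtain ⟨jst, jst', hjst, hjst0, hjstpos, hjst'le⟩ := stable_exists hK hKle hL hL1
  have hjstanti : Antitone jst := by
    apply antitone_of_deriv_nonpos (fun t => (hjst.1 t).differentiableAt)
    intro x
    rw [(hjst.1 x).deriv]
    exact hjst'le x
  set j₀ : ℝ → ℝ := fun t => w * jst t with hj₀def
  have hderiv1 : deriv j₀ = fun t => w * jst' t :=
    funext fun t => ((hjst.1 t).const_mul w).deriv
  have hspec : Differentiable ℝ j₀ ∧ Differentiable ℝ (deriv j₀) ∧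
      (∀ t, deriv (deriv j₀) t = -K t * j₀ t) ∧
      j₀ 0 = w ∧ Antitone (fun t => |j₀ t|) := by
    refine ⟨?_, ?_, ?_, ?_, ?_⟩
    · exact fun t => ((hjst.1 t).const_mul w).differentiableAt
    · rw [hderiv1]
      exact fun t => ((hjst.2 t).const_mul w).differentiableAt
    · intro t
      rw [hderiv1, ((hjst.2 t).const_mul w).deriv]
      show w * (-K t * jst t) = -K t * (w * jst t)
      ring
    · show w * jst 0 = w
      rw [hjst0, mul_one]
    · intro a b hab
      show |w * jst b| ≤ |w * jst a|
      rw [abs_mul, abs_mul, abs_of_pos (hjstpos a), abs_of_pos (hjstpos b)]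
      exact mul_le_mul_of_nonneg_left (hjstanti hab) (abs_nonneg w)
  refine ⟨j₀, hspec, ?_⟩
  intro g hg
  exact spec_unique hKle hL hL1 hg.1 hg.2.1 hg.2.2.1 hg.2.2.2.2
    hspec.1 hspec.2.1 hspec.2.2.1 hspec.2.2.2.2 (by rw [hg.2.2.2.1, hspec.2.2.2.1])
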